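/- Let θ be any angle strictly between 0 and π and let t ≥ 2 be a natural number. Then there is a set of 2t points in the plane realising the angle θ with multiplicity t(t−1); that is, the constant tuple consisting of t(t−1) copies of θ is realised with multiplicity by a set of 2t points in the plane. -/

import Mathlib

open EuclideanGeometry

/-- A set `P` of points realises the angle `θ` if some three points of `P`
form this angle. -/
def Realises {d : ℕ} (P : Set (EuclideanSpace ℝ (Fin d))) (θ : ℝ) : Prop :=
  ∃ A B C : EuclideanSpace ℝ (Fin d),
    A ∈ P ∧ B ∈ P ∧ C ∈ P ∧ A ≠ B ∧ C ≠ B ∧ EuclideanGeometry.angle A B C = θ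

/-- The ray from `B` towards `A`, encoded by its vertex together with the
unit vector in its direction. -/
noncomputable def rayOf {d : ℕ} (B A : EuclideanSpace ℝ (Fin d)) :
    EuclideanSpace ℝ (Fin d) × EuclideanSpace ℝ (Fin d) :=
  (B, ‖A - B‖⁻¹ • (A - B))

/-- A tuple `θ` of angles is realised with multiplicity by `P` if each `θ i` is
realised at some vertex `B i` by points `A i, C i` of `P`, with the unordered
pairs of rays pairwise distinct. -/
def RealisesMult {d n : ℕ} (P : Set (EuclideanSpace ℝ (Fin d))) (θ : Fin n → ℝ) : Prop :=
  ∃ A B C : Fin n → EuclideanSpace ℝ (Fin d),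
    (∀ i, A i ∈ P ∧ B i ∈ P ∧ C i ∈ P ∧ A i ≠ B i ∧ C i ≠ B i ∧
      EuclideanGeometry.angle (A i) (B i) (C i) = θ i) ∧
    Function.Injective fun i =>
      ({rayOf (B i) (A i), rayOf (B i) (C i)} :
        Set (EuclideanSpace ℝ (Fin d) × EuclideanSpace ℝ (Fin d)))

open Real

/-- The point on the unit circle at angle `a`. -/
noncomputable def pt (a : ℝ) : EuclideanSpace ℝ (Fin 2) := !₂[Real.cos a, Real.sin a]

lemma stepA (x y v : ℝ) :
    (cos x - cos v)*(cos y - cos v) + (sin x - sin v)*(sin y - sin v)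
      = cos (x-y) - cos (x-v) - cos (y-v) + 1 := by
  rw [cos_sub, cos_sub, cos_sub]
  linear_combination sin_sq_add_cos_sq v

lemma stepB (a b : ℝ) :
    cos (2*(a-b)) - cos (2*a) - cos (2*b) + 1 = 4 * sin a * sin b * cos (a-b) := by
  rw [cos_two_mul, cos_two_mul, cos_two_mul, cos_sub]
  linear_combination (2*cos b^2 - 2) * sin_sq_add_cos_sq a + (-2*sin a^2) * sin_sq_add_cos_sq b

lemma inner_pt (x y v : ℝ) :
    (inner ℝ (pt x - pt v) (pt y - pt v) : ℝ)
      = 4 * sin ((x-v)/2) * sin ((y-v)/2) * cos ((x-y)/2) := by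
  have h : (inner ℝ (pt x - pt v) (pt y - pt v) : ℝ)
      = (cos x - cos v)*(cos y - cos v) + (sin x - sin v)*(sin y - sin v) := by
    simp [pt, PiLp.inner_apply, Fin.sum_univ_two]; ring
  rw [h, stepA]
  have := stepB ((x-v)/2) ((y-v)/2)
  rw [show 2*((x-v)/2 - (y-v)/2) = x - y by ring, show 2*((x-v)/2) = x - v by ring,
    show 2*((y-v)/2) = y - v by ring, show (x-v)/2 - (y-v)/2 = (x-y)/2 by ring] at this
  linarith

lemma norm_pt_sub (x v : ℝ) : ‖pt x - pt v‖ = 2 * |sin ((x-v)/2)| := by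
  have h := inner_pt x x v
  rw [show (x-x)/2 = 0 by ring, cos_zero] at h
  rw [@norm_eq_sqrt_re_inner ℝ]
  rw [RCLike.re_to_real] at *
  rw [h]
  rw [show 4 * sin ((x-v)/2) * sin ((x-v)/2) * 1 = (2*|sin ((x-v)/2)|)^2 by
    rw [mul_pow]; rw [sq_abs]; ring]
  exact Real.sqrt_sq (by positivity)

lemma norm_pt (a : ℝ) : ‖pt a‖ = 1 := by
  rw [EuclideanSpace.norm_eq]
  simp [pt, Fin.sum_univ_two]

lemma angle_pt {x y v : ℝ} (h : 0 < sin ((x-v)/2) * sin ((y-v)/2)) :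
    EuclideanGeometry.angle (pt x) (pt v) (pt y) = Real.arccos (cos ((x-y)/2)) := by
  rw [EuclideanGeometry.angle, InnerProductGeometry.angle]
  congr 1
  rw [vsub_eq_sub, vsub_eq_sub, inner_pt, norm_pt_sub, norm_pt_sub]
  rw [show 2*|sin ((x-v)/2)| * (2*|sin ((y-v)/2)|) = 4 * (|sin ((x-v)/2) * sin ((y-v)/2)|) by
    rw [abs_mul]; ring]
  rw [abs_of_pos h]
  have h4 : (4 : ℝ) * (sin ((x-v)/2) * sin ((y-v)/2)) ≠ 0 := by positivity
  have h5 : sin ((x-v)/2) ≠ 0 := left_ne_zero_of_mul h.ne'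
  have h6 : sin ((y-v)/2) ≠ 0 := right_ne_zero_of_mul h.ne'
  field_simp

lemma pt_ne {x v : ℝ} (h : sin ((x-v)/2) ≠ 0) : pt x ≠ pt v := by
  intro he
  apply h
  have h0 : ‖pt x - pt v‖ = 0 := by rw [he]; simp
  rw [norm_pt_sub] at h0
  exact abs_eq_zero.mp (by linarith [abs_nonneg (sin ((x-v)/2))])

lemma ray_unique {d : ℕ} {V X Y : EuclideanSpace ℝ (Fin d)}
    (hV : ‖V‖ = 1) (hX : ‖X‖ = 1) (hY : ‖Y‖ = 1) (hXV : X ≠ V) (hYV : Y ≠ V)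
    (h : rayOf V X = rayOf V Y) : X = Y := by
  have h2 : ‖X - V‖⁻¹ • (X - V) = ‖Y - V‖⁻¹ • (Y - V) := congrArg Prod.snd h
  have hx0 : ‖X - V‖ ≠ 0 := by simpa [sub_eq_zero] using hXV
  have hy0 : ‖Y - V‖ ≠ 0 := by simpa [sub_eq_zero] using hYV
  set r : ℝ := ‖X - V‖ / ‖Y - V‖ with hr
  have hrpos : 0 < r := by
    apply div_pos <;>
      exact lt_of_le_of_ne (norm_nonneg _) (Ne.symm (by assumption))
  have hXV' : X - V = r • (Y - V) := by
    have := congrArg (fun z => ‖X - V‖ • z) h2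
    simp only [smul_smul] at this
    rw [mul_inv_cancel₀ hx0, one_smul] at this
    rw [this, hr, div_eq_mul_inv, mul_comm, mul_smul]
  clear_value r
  have e1 : ‖X‖^2 = ‖V‖^2 + 2 * r * (inner ℝ V (Y - V) : ℝ) + r^2 * ‖Y - V‖^2 := by
    have hXe : X = V + r • (Y - V) := by rw [← hXV']; abel
    rw [hXe, norm_add_sq_real, real_inner_smul_right, norm_smul]
    rw [Real.norm_eq_abs, abs_of_pos hrpos]
    ring
  have e2 : (0:ℝ) = 2 * (inner ℝ V (Y - V) : ℝ) + ‖Y - V‖^2 := by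
    have hYe : Y = V + (1:ℝ) • (Y - V) := by simp
    have h3 : ‖Y‖^2 = ‖V‖^2 + 2 * (inner ℝ V (Y - V) : ℝ) + ‖Y - V‖^2 := by
      nth_rewrite 1 [hYe]
      rw [norm_add_sq_real, real_inner_smul_right, norm_smul]
      simp
    rw [hY, hV] at h3
    linarith
  rw [hX, hV] at e1
  have hyn : 0 < ‖Y - V‖^2 := by positivity
  have h5 : r * ‖Y - V‖^2 * (r - 1) = 0 := by linear_combination r * e2 - e1
  have hr1 : r = 1 := by
    rcases mul_eq_zero.mp h5 with h6 | h6
    · exact absurd h6 (by positivity)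
    · linarith
  rw [hr1, one_smul] at hXV'
  have := congrArg (· + V) hXV'
  simpa using this

lemma pt_injOn : Set.InjOn pt (Set.Ioo 0 (2*π)) := by
  intro a ha b hb hab
  have hc : Real.cos a = Real.cos b := by simpa [pt] using congrArg (fun p => p 0) hab
  have hs : Real.sin a = Real.sin b := by simpa [pt] using congrArg (fun p => p 1) hab
  have hexp : Complex.exp (a * Complex.I) = Complex.exp (b * Complex.I) := by
    rw [Complex.exp_mul_I, Complex.exp_mul_I, ← Complex.ofReal_cos, ← Complex.ofReal_sin,
      ← Complex.ofReal_cos, ← Complex.ofReal_sin, hc, hs]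
  obtain ⟨n, hn⟩ := Complex.exp_eq_exp_iff_exists_int.mp hexp
  have h1 : (a : ℂ) * Complex.I = ((b + n * (2*π) : ℝ)) * Complex.I := by
    push_cast
    linear_combination hn
  have h2 : a = b + n * (2*π) := by
    exact_mod_cast mul_right_cancel₀ Complex.I_ne_zero h1
  have hπ := Real.pi_pos
  obtain ⟨ha1, ha2⟩ := ha
  obtain ⟨hb1, hb2⟩ := hb
  have hn1 : (-1:ℝ) < n := by nlinarith
  have hn2 : (n:ℝ) < 1 := by nlinarith
  have hn0 : n = 0 := by
    have g1 : (-1:ℤ) < n := by exact_mod_cast hn1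
    have g2 : n < 1 := by exact_mod_cast hn2
    omega
  rw [hn0] at h2
  simpa using h2

/-- any angle `θ ∈ (0, π)` can be realised with multiplicity
`t(t-1)` by `2t` points in the plane, for `t ≥ 2`. -/
theorem statement5 (θ : ℝ) (hθ : θ ∈ Set.Ioo 0 Real.pi) (t : ℕ) (ht : 2 ≤ t) :
    ∃ P : Finset (EuclideanSpace ℝ (Fin 2)), P.card = 2 * t ∧
      RealisesMult (P : Set (EuclideanSpace ℝ (Fin 2))) (fun _ : Fin (t * (t - 1)) => θ) := by
  classical
  obtain ⟨hθ1, hθ2⟩ := hθ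
  have hπ := Real.pi_pos
  have ht0 : 0 < t := by omega
  have htR : (0:ℝ) < t := by exact_mod_cast ht0
  set M : ℝ := min θ (π - θ) with hM
  have hM0 : 0 < M := lt_min hθ1 (by linarith)
  have hMθ : M ≤ θ := min_le_left _ _
  have hMπ : M ≤ π - θ := min_le_right _ _
  set ε : ℝ := M / t with hε
  have hε0 : 0 < ε := div_pos hM0 htR
  have htε : (t:ℝ) * ε = M := by rw [hε]; field_simp
  clear_value M ε
  -- the 2t points
  set g : Fin 2 × Fin t → ℝ := fun q => ((q.2 : ℕ) + 1 : ℝ) * ε + if q.1 = 0 then 0 else 2*θ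
    with hg
  have hg0 : ∀ i : Fin t, g (0, i) = ((i:ℕ)+1:ℝ) * ε := by intro i; simp [hg]
  have hg1 : ∀ i : Fin t, g (1, i) = ((i:ℕ)+1:ℝ) * ε + 2*θ := by intro i; simp [hg]
  have hgite : ∀ (sq : Fin 2) (i : Fin t),
      g (sq, i) = ((i:ℕ)+1:ℝ)*ε + (if sq = 0 then 0 else 2*θ) := fun _ _ => rfl
  clear_value g
  have hgle : ∀ i : Fin t, ((i:ℕ)+1:ℝ) * ε ≤ M := by
    intro i
    have h1 : ((i:ℕ)+1:ℝ) ≤ t := by exact_mod_cast i.2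
    calc ((i:ℕ)+1:ℝ) * ε ≤ (t:ℝ) * ε := mul_le_mul_of_nonneg_right h1 hε0.le
    _ = M := htε
  have hgpos : ∀ i : Fin t, 0 < ((i:ℕ)+1:ℝ) * ε := by intro i; positivity
  have hgmem : ∀ q, g q ∈ Set.Ioo (0:ℝ) (2*π) := by
    rintro ⟨sq, i⟩
    have h1 : g (sq, i) = ((i:ℕ)+1:ℝ)*ε + (if sq = 0 then 0 else 2*θ) := hgite sq i
    rw [Set.mem_Ioo, h1]
    constructor
    · split_ifs <;> linarith [hgpos i, hgle i]
    · split_ifs <;> linarith [hgpos i, hgle i]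
  have hginj : Function.Injective g := by
    rintro ⟨s1, i1⟩ ⟨s2, i2⟩ h
    have h1 : ((i1:ℕ)+1:ℝ)*ε + (if s1 = 0 then 0 else 2*θ)
        = ((i2:ℕ)+1:ℝ)*ε + (if s2 = 0 then 0 else 2*θ) := by
      rw [← hgite, ← hgite]; exact h
    have hi12 : ∀ (a b : Fin t), ((a:ℕ)+1:ℝ) * ε = ((b:ℕ)+1:ℝ) * ε → a = b := by
      intro a b hab
      have h3 : ((a:ℕ):ℝ) = ((b:ℕ):ℝ) := by
        have hε0' : ε ≠ 0 := ne_of_gt hε0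
        field_simp at hab
        linarith
      have h4 : (a:ℕ) = (b:ℕ) := by exact_mod_cast h3
      exact Fin.ext h4
    have hss : s1 = s2 := by
      by_contra hss
      split_ifs at h1 with c1 c2 c2
      · exact hss (c1.trans c2.symm)
      · linarith [hgle i1, hgpos i2]
      · linarith [hgle i2, hgpos i1]
      · apply hss
        apply Fin.ext
        have w1 : (s1:ℕ) < 2 := s1.2
        have w2 : (s2:ℕ) < 2 := s2.2
        have w3 : (s1:ℕ) ≠ 0 := fun hh => c1 (Fin.ext hh)
        have w4 : (s2:ℕ) ≠ 0 := fun hh => c2 (Fin.ext hh)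
        omega
    subst hss
    have : ((i1:ℕ)+1:ℝ)*ε = ((i2:ℕ)+1:ℝ)*ε := by
      split_ifs at h1 <;> linarith
    rw [hi12 _ _ this]
  set f : Fin 2 × Fin t → EuclideanSpace ℝ (Fin 2) := fun q => pt (g q) with hf
  have hfinj : Function.Injective f := by
    intro q1 q2 h
    exact hginj (pt_injOn (hgmem q1) (hgmem q2) h)
  have hfnorm : ∀ q, ‖f q‖ = 1 := fun q => norm_pt (g q)
  have hfq : ∀ q, f q = pt (g q) := fun q => rfl
  clear_value f
  -- the key per-pair facts
  have key : ∀ i j : Fin t, i ≠ j →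
      (f (0,i) ≠ (if (j:ℕ) < (i:ℕ) then f (0,j) else f (1,j)) ∧
       f (1,i) ≠ (if (j:ℕ) < (i:ℕ) then f (0,j) else f (1,j)) ∧
       EuclideanGeometry.angle (f (0,i))
         (if (j:ℕ) < (i:ℕ) then f (0,j) else f (1,j)) (f (1,i)) = θ) := by
    intro i j hij
    by_cases hlt : (j:ℕ) < (i:ℕ)
    · rw [if_pos hlt]
      have hK1 : (1:ℝ) ≤ ((i:ℕ):ℝ) - ((j:ℕ):ℝ) := by
        have h1 : ((j:ℕ)+1:ℝ) ≤ ((i:ℕ):ℝ) := by exact_mod_cast hlt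
        linarith
      have hKt : ((i:ℕ):ℝ) - ((j:ℕ):ℝ) < t := by
        have h1 : ((i:ℕ):ℝ) < t := by exact_mod_cast i.2
        have h0 : (0:ℝ) ≤ ((j:ℕ):ℝ) := Nat.cast_nonneg _
        linarith
      set K : ℝ := ((i:ℕ):ℝ) - ((j:ℕ):ℝ) with hKdef
      clear_value K
      have hKε1 : 0 < K * ε := mul_pos (by linarith) hε0
      have hKε2 : K * ε < M := by
        have h7 := mul_lt_mul_of_pos_right hKt hε0
        linarith [htε]
      have harg1 : (g (0,i) - g (0,j))/2 = K * ε / 2 := by rw [hg0, hg0, hKdef]; ring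
      have harg2 : (g (1,i) - g (0,j))/2 = θ + K * ε / 2 := by rw [hg1, hg0, hKdef]; ring
      have hs1 : 0 < sin ((g (0,i) - g (0,j))/2) := by
        rw [harg1]
        exact sin_pos_of_pos_of_lt_pi (by linarith) (by linarith)
      have hs2 : 0 < sin ((g (1,i) - g (0,j))/2) := by
        rw [harg2]
        exact sin_pos_of_pos_of_lt_pi (by linarith) (by linarith)
      rw [hfq, hfq, hfq]
      refine ⟨pt_ne (ne_of_gt hs1), pt_ne (ne_of_gt hs2), ?_⟩
      rw [angle_pt (mul_pos hs1 hs2)]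
      rw [show (g (0,i) - g (1,i))/2 = -θ by rw [hg0, hg1]; ring, cos_neg]
      exact Real.arccos_cos hθ1.le hθ2.le
    · rw [if_neg hlt]
      have hlt' : (i:ℕ) < (j:ℕ) := by
        rcases Nat.lt_or_ge (i:ℕ) (j:ℕ) with h | h
        · exact h
        · exact absurd (Fin.ext (Nat.le_antisymm (Nat.le_of_not_lt hlt) h)) hij
      have hK1 : (1:ℝ) ≤ ((j:ℕ):ℝ) - ((i:ℕ):ℝ) := by
        have h1 : ((i:ℕ)+1:ℝ) ≤ ((j:ℕ):ℝ) := by exact_mod_cast hlt'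
        linarith
      have hKt : ((j:ℕ):ℝ) - ((i:ℕ):ℝ) < t := by
        have h1 : ((j:ℕ):ℝ) < t := by exact_mod_cast j.2
        have h0 : (0:ℝ) ≤ ((i:ℕ):ℝ) := Nat.cast_nonneg _
        linarith
      set K : ℝ := ((j:ℕ):ℝ) - ((i:ℕ):ℝ) with hKdef
      clear_value K
      have hKε1 : 0 < K * ε := mul_pos (by linarith) hε0
      have hKε2 : K * ε < M := by
        have h7 := mul_lt_mul_of_pos_right hKt hε0
        linarith [htε]
      have harg1 : (g (0,i) - g (1,j))/2 = -(θ + K * ε / 2) := by rw [hg0, hg1, hKdef]; ring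
      have harg2 : (g (1,i) - g (1,j))/2 = -(K * ε / 2) := by rw [hg1, hg1, hKdef]; ring
      have hs1 : sin ((g (0,i) - g (1,j))/2) < 0 := by
        rw [harg1, sin_neg]
        have : 0 < sin (θ + K * ε / 2) :=
          sin_pos_of_pos_of_lt_pi (by linarith) (by linarith)
        linarith
      have hs2 : sin ((g (1,i) - g (1,j))/2) < 0 := by
        rw [harg2, sin_neg]
        have : 0 < sin (K * ε / 2) :=
          sin_pos_of_pos_of_lt_pi (by linarith) (by linarith)
        linarith
      rw [hfq, hfq, hfq]
      refine ⟨pt_ne (ne_of_lt hs1), pt_ne (ne_of_lt hs2), ?_⟩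
      rw [angle_pt (mul_pos_of_neg_of_neg hs1 hs2)]
      rw [show (g (0,i) - g (1,i))/2 = -θ by rw [hg0, hg1]; ring, cos_neg]
      exact Real.arccos_cos hθ1.le hθ2.le
  refine ⟨Finset.image f Finset.univ, ?_, ?_⟩
  · rw [Finset.card_image_of_injective _ hfinj, Finset.card_univ, Fintype.card_prod,
      Fintype.card_fin, Fintype.card_fin]
  -- the indexing equivalence
  have hcard : Fintype.card {q : Fin t × Fin t // q.1 ≠ q.2} = t * (t - 1) := by
    have e0 : {q : Fin t × Fin t // q.1 = q.2} ≃ Fin t :=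
      { toFun := fun q => q.1.1
        invFun := fun a => ⟨(a, a), rfl⟩
        left_inv := by rintro ⟨⟨a, b⟩, h⟩; cases h; rfl
        right_inv := fun a => rfl }
    have h1 : Fintype.card {q : Fin t × Fin t // q.1 = q.2} = t :=
      (Fintype.card_congr e0).trans (Fintype.card_fin t)
    have h2 := Fintype.card_subtype_compl (fun q : Fin t × Fin t => q.1 = q.2)
    have h3 : Fintype.card (Fin t × Fin t) = t * t := by simp
    have h4 : t * t - t = t * (t - 1) := by
      obtain ⟨s, rfl⟩ : ∃ s, t = s + 2 := ⟨t - 2, by omega⟩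
      have h5 : (s+2) * (s+2) = (s+2) * ((s+2) - 1) + (s+2) := by
        have h6 : (s+2) - 1 = s + 1 := by omega
        rw [h6]; ring
      omega
    rw [h2, h1, h3, h4]
  set e := (Fintype.equivFinOfCardEq hcard).symm with he
  clear_value e
  refine ⟨fun m => f (0, (e m).1.1),
    fun m => if ((e m).1.2 : ℕ) < ((e m).1.1 : ℕ) then f (0, (e m).1.2) else f (1, (e m).1.2),
    fun m => f (1, (e m).1.1), ?_, ?_⟩
  · intro m
    obtain ⟨k1, k2, k3⟩ := key (e m).1.1 (e m).1.2 (e m).2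
    have hmem : ∀ q : Fin 2 × Fin t,
        f q ∈ ((Finset.image f Finset.univ : Finset (EuclideanSpace ℝ (Fin 2))) :
          Set (EuclideanSpace ℝ (Fin 2))) := by
      intro q
      exact Finset.mem_coe.mpr (Finset.mem_image.mpr ⟨q, Finset.mem_univ q, rfl⟩)
    refine ⟨hmem _, ?_, hmem _, k1, k2, k3⟩
    show (if ((e m).1.2 : ℕ) < ((e m).1.1 : ℕ) then f (0, (e m).1.2) else f (1, (e m).1.2))
      ∈ ((Finset.image f Finset.univ : Finset (EuclideanSpace ℝ (Fin 2))) :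
        Set (EuclideanSpace ℝ (Fin 2)))
    split_ifs <;> exact hmem _
  · intro m1 m2 hset
    replace hset :
        ({rayOf (if ((e m1).1.2 : ℕ) < ((e m1).1.1 : ℕ) then f (0, (e m1).1.2)
            else f (1, (e m1).1.2)) (f (0, (e m1).1.1)),
          rayOf (if ((e m1).1.2 : ℕ) < ((e m1).1.1 : ℕ) then f (0, (e m1).1.2)
            else f (1, (e m1).1.2)) (f (1, (e m1).1.1))} :
          Set (EuclideanSpace ℝ (Fin 2) × EuclideanSpace ℝ (Fin 2)))
        = ({rayOf (if ((e m2).1.2 : ℕ) < ((e m2).1.1 : ℕ) then f (0, (e m2).1.2)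
            else f (1, (e m2).1.2)) (f (0, (e m2).1.1)),
          rayOf (if ((e m2).1.2 : ℕ) < ((e m2).1.1 : ℕ) then f (0, (e m2).1.2)
            else f (1, (e m2).1.2)) (f (1, (e m2).1.1))} :
          Set (EuclideanSpace ℝ (Fin 2) × EuclideanSpace ℝ (Fin 2))) := hset
    have hBf : ∀ m : Fin (t * (t-1)),
        (if ((e m).1.2 : ℕ) < ((e m).1.1 : ℕ) then f (0, (e m).1.2) else f (1, (e m).1.2))
          = f (if ((e m).1.2 : ℕ) < ((e m).1.1 : ℕ) then (0, (e m).1.2) else (1, (e m).1.2)) := by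
      intro m; split_ifs <;> rfl
    -- the vertices agree
    have hmem1 : rayOf (if ((e m1).1.2 : ℕ) < ((e m1).1.1 : ℕ) then f (0, (e m1).1.2)
          else f (1, (e m1).1.2)) (f (0, (e m1).1.1))
        ∈ ({rayOf (if ((e m2).1.2 : ℕ) < ((e m2).1.1 : ℕ) then f (0, (e m2).1.2)
            else f (1, (e m2).1.2)) (f (0, (e m2).1.1)),
          rayOf (if ((e m2).1.2 : ℕ) < ((e m2).1.1 : ℕ) then f (0, (e m2).1.2)
            else f (1, (e m2).1.2)) (f (1, (e m2).1.1))} :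
          Set (EuclideanSpace ℝ (Fin 2) × EuclideanSpace ℝ (Fin 2))) := by
      rw [← hset]; exact Set.mem_insert _ _
    have hBB : (if ((e m1).1.2 : ℕ) < ((e m1).1.1 : ℕ) then f (0, (e m1).1.2)
          else f (1, (e m1).1.2))
        = (if ((e m2).1.2 : ℕ) < ((e m2).1.1 : ℕ) then f (0, (e m2).1.2)
          else f (1, (e m2).1.2)) := by
      rcases Set.mem_insert_iff.mp hmem1 with h | h
      · exact congrArg Prod.fst h
      · exact congrArg Prod.fst (Set.mem_singleton_iff.mp h)
    have hj : (e m1).1.2 = (e m2).1.2 := by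
      rw [hBf, hBf] at hBB
      have := hfinj hBB
      split_ifs at this <;> · have := Prod.ext_iff.mp this; exact this.2
    -- now the A-ray
    obtain ⟨k1, k2, k3⟩ := key (e m1).1.1 (e m1).1.2 (e m1).2
    obtain ⟨l1, l2, l3⟩ := key (e m2).1.1 (e m2).1.2 (e m2).2
    have hnormB : ‖(if ((e m1).1.2 : ℕ) < ((e m1).1.1 : ℕ) then f (0, (e m1).1.2)
        else f (1, (e m1).1.2))‖ = 1 := by
      split_ifs <;> exact hfnorm _
    have hl1' : f (0, (e m2).1.1) ≠ (if ((e m1).1.2 : ℕ) < ((e m1).1.1 : ℕ)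
        then f (0, (e m1).1.2) else f (1, (e m1).1.2)) := by rw [hBB]; exact l1
    have hl2' : f (1, (e m2).1.1) ≠ (if ((e m1).1.2 : ℕ) < ((e m1).1.1 : ℕ)
        then f (0, (e m1).1.2) else f (1, (e m1).1.2)) := by rw [hBB]; exact l2
    have hi : (e m1).1.1 = (e m2).1.1 := by
      rcases Set.mem_insert_iff.mp hmem1 with h | h
      · rw [← hBB] at h
        have h7 := ray_unique hnormB (hfnorm _) (hfnorm _) k1 hl1' h
        have h8 := hfinj h7
        exact (Prod.ext_iff.mp h8).2
      · have h' := Set.mem_singleton_iff.mp h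
        rw [← hBB] at h'
        have h7 := ray_unique hnormB (hfnorm _) (hfnorm _) k1 hl2' h'
        have h8 := hfinj h7
        have h01 : (0 : Fin 2) = 1 := (Prod.ext_iff.mp h8).1
        exact absurd h01 (by decide)
    apply e.injective
    exact Subtype.ext (Prod.ext hi hj)
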